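/- Let G be a nontrivial additive subgroup of ℂ and let λ ∈ ℂ with λ ∉ {0, 1, −1, −2}. Then every 1/2-derivation of the deformed generalized Heisenberg–Virasoro algebra g(G,λ) is a scalar multiple of the identity map. -/

import Mathlib

open scoped Classical

set_option maxHeartbeats 2000000

/-- Index set for the basis of the deformed generalized Heisenberg–Virasoro
algebra `g(G, λ)` (for `λ ∉ {0, 1, -2}`). -/
inductive DGHVIdx (G : AddSubgroup ℂ) : Type
  | L : G → DGHVIdx G
  | I : G → DGHVIdx G
  | CL : DGHVIdx G

/-- for `λ ∉ {0, 1, -1, -2}`, every `1/2`-derivation of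
`g(G, λ)` is a scalar multiple of the identity. -/
theorem halfDerivation_dgHV_is_trivial
    (G : AddSubgroup ℂ) [Nontrivial G]
    (lam : ℂ) (hlam0 : lam ≠ 0) (hlam1 : lam ≠ 1) (hlamm1 : lam ≠ -1)
    (hlam2 : lam ≠ -2)
    (Lg : Type*) [LieRing Lg] [LieAlgebra ℂ Lg]
    (bas : Module.Basis (DGHVIdx G) ℂ Lg)
    (hLL : ∀ a b : G, ⁅bas (DGHVIdx.L a), bas (DGHVIdx.L b)⁆ =
      ((b : ℂ) - (a : ℂ)) • bas (DGHVIdx.L (a + b)) +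
        (if a + b = 0 then ((a : ℂ) ^ 3 - (a : ℂ)) / 12 else 0) • bas DGHVIdx.CL)
    (hLI : ∀ a b : G, ⁅bas (DGHVIdx.L a), bas (DGHVIdx.I b)⁆ =
      ((b : ℂ) - lam * (a : ℂ)) • bas (DGHVIdx.I (a + b)))
    (hII : ∀ a b : G, ⁅bas (DGHVIdx.I a), bas (DGHVIdx.I b)⁆ = 0)
    (hCL : ∀ x : Lg, ⁅bas DGHVIdx.CL, x⁆ = 0)
    (φ : Lg →ₗ[ℂ] Lg)
    (hφ : ∀ x y : Lg, φ ⁅x, y⁆ = (1 / 2 : ℂ) • (⁅φ x, y⁆ + ⁅x, φ y⁆)) :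
    ∃ c : ℂ, φ = c • (LinearMap.id : Lg →ₗ[ℂ] Lg) := by
  -- coercion helpers
  have cinj : ∀ x y : G, (x : ℂ) = y → x = y := fun x y h => Subtype.ext h
  have cne : ∀ x : G, x ≠ 0 → (x : ℂ) ≠ 0 := fun x hx h =>
    hx (by exact_mod_cast ZeroMemClass.coe_eq_zero.mp h)
  have ne0 : ∀ x : G, (x : ℂ) ≠ 0 → x ≠ 0 := fun x h hx => h (by rw [hx]; simp)
  obtain ⟨e, he⟩ := exists_ne (0 : G)
  have heC : (e : ℂ) ≠ 0 := cne e he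
  -- we can avoid any finite set of complex values inside G
  have avoid : ∀ l : List ℂ, ∃ a : G, ∀ z ∈ l, (a : ℂ) ≠ z := by
    intro l
    have hinj : Function.Injective (fun n : ℕ => (((n + 1) • e : G) : ℂ)) := by
      intro i j hij
      simp only at hij
      push_cast at hij
      have h2 : ((i : ℂ) + 1) * e = ((j : ℂ) + 1) * e := by linear_combination hij
      have h3 : ((i : ℂ) + 1) = ((j : ℂ) + 1) := mul_right_cancel₀ heC h2
      have h4 : (i : ℂ) = j := by linear_combination h3
      exact_mod_cast h4
    have hrange : (Set.range (fun n : ℕ => (((n + 1) • e : G) : ℂ))).Infinite :=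
      Set.infinite_range_of_injective hinj
    obtain ⟨x, hx, hxs⟩ := hrange.exists_notMem_finset l.toFinset
    obtain ⟨n, rfl⟩ := hx
    exact ⟨(n + 1) • e, fun z hz hc =>
      hxs (by simp only []; rw [hc]; exact List.mem_toFinset.mpr hz)⟩
  have hCR : ∀ x : Lg, ⁅x, bas DGHVIdx.CL⁆ = 0 := fun x => by
    rw [← lie_skew, hCL, neg_zero]
  -- coordinates of brackets with basis elements
  have cLL : ∀ (b d : G) (x : Lg), bas.coord (DGHVIdx.L d) ⁅bas (DGHVIdx.L b), x⁆ =
      ((d : ℂ) - 2 * (b : ℂ)) * bas.coord (DGHVIdx.L (d - b)) x := by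
    intro b d
    have hfun : (bas.coord (DGHVIdx.L d)).comp
        ((LieAlgebra.ad ℂ Lg (bas (DGHVIdx.L b))) : Lg →ₗ[ℂ] Lg)
        = ((d : ℂ) - 2 * (b : ℂ)) • bas.coord (DGHVIdx.L (d - b)) := by
      apply bas.ext
      intro i
      cases i with
      | L a =>
        by_cases h : b + a = d
        · have ha : a = d - b := by rw [← h]; abel
          have hc : (b : ℂ) + a = d := by exact_mod_cast congrArg (fun z : G => (z : ℂ)) h
          simp [LieAlgebra.ad_apply, hLL, Module.Basis.repr_self, Finsupp.single_apply, h, ← ha,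
            apply_ite (bas.repr), apply_ite (fun g : DGHVIdx G →₀ ℂ => g (DGHVIdx.L d))]
          linear_combination hc
        · have ha : ¬(d - b = a) := fun hh => h (by rw [← hh]; abel)
          have ha' : ¬(a = d - b) := fun hh => ha hh.symm
          simp [LieAlgebra.ad_apply, hLL, Module.Basis.repr_self, Finsupp.single_apply, h, ha',
            apply_ite (bas.repr), apply_ite (fun g : DGHVIdx G →₀ ℂ => g (DGHVIdx.L d))]
      | I a => simp [LieAlgebra.ad_apply, hLI, Module.Basis.repr_self, Finsupp.single_apply]
      | CL => simp [LieAlgebra.ad_apply, hCR, Module.Basis.repr_self, Finsupp.single_apply]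
    intro x
    have := LinearMap.congr_fun hfun x
    simpa [LieAlgebra.ad_apply, smul_eq_mul] using this
  have cLI : ∀ (b d : G) (x : Lg), bas.coord (DGHVIdx.I d) ⁅bas (DGHVIdx.L b), x⁆ =
      ((d : ℂ) - (b : ℂ) - lam * (b : ℂ)) * bas.coord (DGHVIdx.I (d - b)) x := by
    intro b d
    have hfun : (bas.coord (DGHVIdx.I d)).comp
        ((LieAlgebra.ad ℂ Lg (bas (DGHVIdx.L b))) : Lg →ₗ[ℂ] Lg)
        = ((d : ℂ) - (b : ℂ) - lam * (b : ℂ)) • bas.coord (DGHVIdx.I (d - b)) := by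
      apply bas.ext
      intro i
      cases i with
      | L a => simp [LieAlgebra.ad_apply, hLL, Module.Basis.repr_self, Finsupp.single_apply,
          apply_ite (bas.repr), apply_ite (fun g : DGHVIdx G →₀ ℂ => g (DGHVIdx.I d))]
      | I a =>
        by_cases h : b + a = d
        · have ha : a = d - b := by rw [← h]; abel
          have hc : (b : ℂ) + a = d := by exact_mod_cast congrArg (fun z : G => (z : ℂ)) h
          simp [LieAlgebra.ad_apply, hLI, Module.Basis.repr_self, Finsupp.single_apply, h, ← ha]
          linear_combination hc
        · have ha : ¬(d - b = a) := fun hh => h (by rw [← hh]; abel)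
          have ha' : ¬(a = d - b) := fun hh => ha hh.symm
          simp [LieAlgebra.ad_apply, hLI, Module.Basis.repr_self, Finsupp.single_apply, h, ha']
      | CL => simp [LieAlgebra.ad_apply, hCR, Module.Basis.repr_self, Finsupp.single_apply]
    intro x
    have := LinearMap.congr_fun hfun x
    simpa [LieAlgebra.ad_apply, smul_eq_mul] using this
  have cLC : ∀ (b : G) (x : Lg), bas.coord DGHVIdx.CL ⁅bas (DGHVIdx.L b), x⁆ =
      (((b : ℂ) ^ 3 - (b : ℂ)) / 12) * bas.coord (DGHVIdx.L (-b)) x := by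
    intro b
    have hfun : (bas.coord DGHVIdx.CL).comp
        ((LieAlgebra.ad ℂ Lg (bas (DGHVIdx.L b))) : Lg →ₗ[ℂ] Lg)
        = (((b : ℂ) ^ 3 - (b : ℂ)) / 12) • bas.coord (DGHVIdx.L (-b)) := by
      apply bas.ext
      intro i
      cases i with
      | L a =>
        by_cases h : b + a = 0
        · have ha : a = -b := by rw [← neg_eq_of_add_eq_zero_right h]
          simp [LieAlgebra.ad_apply, hLL, Module.Basis.repr_self, Finsupp.single_apply, h, ha,
            apply_ite (bas.repr), apply_ite (fun g : DGHVIdx G →₀ ℂ => g DGHVIdx.CL)]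
        · have ha : ¬(a = -b) := fun hh => h (by rw [hh]; abel)
          simp [LieAlgebra.ad_apply, hLL, Module.Basis.repr_self, Finsupp.single_apply, h, ha,
            apply_ite (bas.repr), apply_ite (fun g : DGHVIdx G →₀ ℂ => g DGHVIdx.CL)]
      | I a => simp [LieAlgebra.ad_apply, hLI, Module.Basis.repr_self, Finsupp.single_apply]
      | CL => simp [LieAlgebra.ad_apply, hCR, Module.Basis.repr_self, Finsupp.single_apply]
    intro x
    have := LinearMap.congr_fun hfun x
    simpa [LieAlgebra.ad_apply, smul_eq_mul] using this
  have cIL : ∀ (b d : G) (x : Lg), bas.coord (DGHVIdx.L d) ⁅bas (DGHVIdx.I b), x⁆ = 0 := by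
    intro b d
    have hfun : (bas.coord (DGHVIdx.L d)).comp
        ((LieAlgebra.ad ℂ Lg (bas (DGHVIdx.I b))) : Lg →ₗ[ℂ] Lg) = 0 := by
      apply bas.ext
      intro i
      cases i with
      | L a =>
        have hIL : ⁅bas (DGHVIdx.I b), bas (DGHVIdx.L a)⁆
            = -(((b : ℂ) - lam * a) • bas (DGHVIdx.I (a + b))) := by
          rw [← lie_skew, hLI]
        simp [LieAlgebra.ad_apply, hIL, Module.Basis.repr_self, Finsupp.single_apply]
      | I a => simp [LieAlgebra.ad_apply, hII]
      | CL => simp [LieAlgebra.ad_apply, hCR]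
    intro x
    have := LinearMap.congr_fun hfun x
    simpa [LieAlgebra.ad_apply] using this
  have cIC : ∀ (b : G) (x : Lg), bas.coord DGHVIdx.CL ⁅bas (DGHVIdx.I b), x⁆ = 0 := by
    intro b
    have hfun : (bas.coord DGHVIdx.CL).comp
        ((LieAlgebra.ad ℂ Lg (bas (DGHVIdx.I b))) : Lg →ₗ[ℂ] Lg) = 0 := by
      apply bas.ext
      intro i
      cases i with
      | L a =>
        have hIL : ⁅bas (DGHVIdx.I b), bas (DGHVIdx.L a)⁆
            = -(((b : ℂ) - lam * a) • bas (DGHVIdx.I (a + b))) := by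
          rw [← lie_skew, hLI]
        simp [LieAlgebra.ad_apply, hIL, Module.Basis.repr_self, Finsupp.single_apply]
      | I a => simp [LieAlgebra.ad_apply, hII]
      | CL => simp [LieAlgebra.ad_apply, hCR]
    intro x
    have := LinearMap.congr_fun hfun x
    simpa [LieAlgebra.ad_apply] using this
  have cII : ∀ (b d : G) (x : Lg), bas.coord (DGHVIdx.I d) ⁅bas (DGHVIdx.I b), x⁆ =
      -((b : ℂ) - lam * ((d : ℂ) - (b : ℂ))) * bas.coord (DGHVIdx.L (d - b)) x := by
    intro b d
    have hfun : (bas.coord (DGHVIdx.I d)).comp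
        ((LieAlgebra.ad ℂ Lg (bas (DGHVIdx.I b))) : Lg →ₗ[ℂ] Lg)
        = (-((b : ℂ) - lam * ((d : ℂ) - (b : ℂ)))) • bas.coord (DGHVIdx.L (d - b)) := by
      apply bas.ext
      intro i
      cases i with
      | L a =>
        have hIL : ⁅bas (DGHVIdx.I b), bas (DGHVIdx.L a)⁆
            = -(((b : ℂ) - lam * a) • bas (DGHVIdx.I (a + b))) := by
          rw [← lie_skew, hLI]
        by_cases h : a + b = d
        · have ha : a = d - b := by rw [← h]; abel
          have hc : (a : ℂ) + b = d := by exact_mod_cast congrArg (fun z : G => (z : ℂ)) h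
          simp [LieAlgebra.ad_apply, hIL, Module.Basis.repr_self, Finsupp.single_apply, h, ← ha]
          exact Or.inl (by linear_combination hc)
        · have ha : ¬(d - b = a) := fun hh => h (by rw [← hh]; abel)
          have ha' : ¬(a = d - b) := fun hh => ha hh.symm
          simp [LieAlgebra.ad_apply, hIL, Module.Basis.repr_self, Finsupp.single_apply, h, ha']
      | I a => simp [LieAlgebra.ad_apply, hII]
      | CL => simp [LieAlgebra.ad_apply, hCR]
    intro x
    have := LinearMap.congr_fun hfun x
    simpa [LieAlgebra.ad_apply, smul_eq_mul] using this
  -- the coordinate functions of φ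
  set fA : G → G → ℂ := fun b c => bas.coord (DGHVIdx.L c) (φ (bas (DGHVIdx.L b))) with hfA
  set fB : G → G → ℂ := fun b c => bas.coord (DGHVIdx.I c) (φ (bas (DGHVIdx.L b))) with hfB
  set fC : G → ℂ := fun b => bas.coord DGHVIdx.CL (φ (bas (DGHVIdx.L b))) with hfC
  set fD : G → G → ℂ := fun b c => bas.coord (DGHVIdx.L c) (φ (bas (DGHVIdx.I b))) with hfD
  set fE : G → G → ℂ := fun b c => bas.coord (DGHVIdx.I c) (φ (bas (DGHVIdx.I b))) with hfE
  set fF : G → ℂ := fun b => bas.coord DGHVIdx.CL (φ (bas (DGHVIdx.I b))) with hfF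
  set gl : G → ℂ := fun c => bas.coord (DGHVIdx.L c) (φ (bas DGHVIdx.CL)) with hgl
  set gi : G → ℂ := fun c => bas.coord (DGHVIdx.I c) (φ (bas DGHVIdx.CL)) with hgi
  set gc : ℂ := bas.coord DGHVIdx.CL (φ (bas DGHVIdx.CL)) with hgc
  -- master equations
  have MLL_L : ∀ a b d : G,
      ((b : ℂ) - a) * fA (a + b) d + (if a + b = 0 then ((a : ℂ) ^ 3 - a) / 12 else 0) * gl d
        = (1 / 2) * (-(((d : ℂ) - 2 * b) * fA a (d - b)) + ((d : ℂ) - 2 * a) * fA b (d - a)) := by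
    intro a b d
    have h := congrArg (bas.coord (DGHVIdx.L d)) (hφ (bas (DGHVIdx.L a)) (bas (DGHVIdx.L b)))
    rw [hLL, show ⁅φ (bas (DGHVIdx.L a)), bas (DGHVIdx.L b)⁆
        = -⁅bas (DGHVIdx.L b), φ (bas (DGHVIdx.L a))⁆ from (lie_skew _ _).symm] at h
    simp only [map_add, map_smul, map_neg, smul_eq_mul, cLL] at h
    simp only [hfA, hgl]
    linear_combination h
  have MLL_I : ∀ a b d : G,
      ((b : ℂ) - a) * fB (a + b) d + (if a + b = 0 then ((a : ℂ) ^ 3 - a) / 12 else 0) * gi d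
        = (1 / 2) * (-(((d : ℂ) - b - lam * b) * fB a (d - b))
            + ((d : ℂ) - a - lam * a) * fB b (d - a)) := by
    intro a b d
    have h := congrArg (bas.coord (DGHVIdx.I d)) (hφ (bas (DGHVIdx.L a)) (bas (DGHVIdx.L b)))
    rw [hLL, show ⁅φ (bas (DGHVIdx.L a)), bas (DGHVIdx.L b)⁆
        = -⁅bas (DGHVIdx.L b), φ (bas (DGHVIdx.L a))⁆ from (lie_skew _ _).symm] at h
    simp only [map_add, map_smul, map_neg, smul_eq_mul, cLI] at h
    simp only [hfB, hgi]
    linear_combination h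
  have MLL_C : ∀ a b : G,
      ((b : ℂ) - a) * fC (a + b) + (if a + b = 0 then ((a : ℂ) ^ 3 - a) / 12 else 0) * gc
        = (1 / 2) * (-((((b : ℂ) ^ 3 - b) / 12) * fA a (-b))
            + (((a : ℂ) ^ 3 - a) / 12) * fA b (-a)) := by
    intro a b
    have h := congrArg (bas.coord DGHVIdx.CL) (hφ (bas (DGHVIdx.L a)) (bas (DGHVIdx.L b)))
    rw [hLL, show ⁅φ (bas (DGHVIdx.L a)), bas (DGHVIdx.L b)⁆
        = -⁅bas (DGHVIdx.L b), φ (bas (DGHVIdx.L a))⁆ from (lie_skew _ _).symm] at h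
    simp only [map_add, map_smul, map_neg, smul_eq_mul, cLC] at h
    simp only [hfA, hfC, hgc]
    linear_combination h
  have MLI_L : ∀ a b d : G,
      ((b : ℂ) - lam * a) * fD (a + b) d = (1 / 2) * (((d : ℂ) - 2 * a) * fD b (d - a)) := by
    intro a b d
    have h := congrArg (bas.coord (DGHVIdx.L d)) (hφ (bas (DGHVIdx.L a)) (bas (DGHVIdx.I b)))
    rw [hLI, show ⁅φ (bas (DGHVIdx.L a)), bas (DGHVIdx.I b)⁆
        = -⁅bas (DGHVIdx.I b), φ (bas (DGHVIdx.L a))⁆ from (lie_skew _ _).symm] at h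
    simp only [map_add, map_smul, map_neg, smul_eq_mul, cIL, cLL] at h
    simp only [hfD]
    linear_combination h
  have MLI_I : ∀ a b d : G,
      ((b : ℂ) - lam * a) * fE (a + b) d
        = (1 / 2) * (((b : ℂ) - lam * ((d : ℂ) - b)) * fA a (d - b)
            + ((d : ℂ) - a - lam * a) * fE b (d - a)) := by
    intro a b d
    have h := congrArg (bas.coord (DGHVIdx.I d)) (hφ (bas (DGHVIdx.L a)) (bas (DGHVIdx.I b)))
    rw [hLI, show ⁅φ (bas (DGHVIdx.L a)), bas (DGHVIdx.I b)⁆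
        = -⁅bas (DGHVIdx.I b), φ (bas (DGHVIdx.L a))⁆ from (lie_skew _ _).symm] at h
    simp only [map_add, map_smul, map_neg, smul_eq_mul, cII, cLI] at h
    simp only [hfA, hfE]
    linear_combination h
  have MLI_C : ∀ a b : G,
      ((b : ℂ) - lam * a) * fF (a + b)
        = (1 / 2) * ((((a : ℂ) ^ 3 - a) / 12) * fD b (-a)) := by
    intro a b
    have h := congrArg (bas.coord DGHVIdx.CL) (hφ (bas (DGHVIdx.L a)) (bas (DGHVIdx.I b)))
    rw [hLI, show ⁅φ (bas (DGHVIdx.L a)), bas (DGHVIdx.I b)⁆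
        = -⁅bas (DGHVIdx.I b), φ (bas (DGHVIdx.L a))⁆ from (lie_skew _ _).symm] at h
    simp only [map_add, map_smul, map_neg, smul_eq_mul, cIC, cLC] at h
    simp only [hfD, hfF]
    linear_combination h
  have MII_I : ∀ a b d : G,
      0 = (1 / 2) * (((b : ℂ) - lam * ((d : ℂ) - b)) * fD a (d - b)
          - ((a : ℂ) - lam * ((d : ℂ) - a)) * fD b (d - a)) := by
    intro a b d
    have h := congrArg (bas.coord (DGHVIdx.I d)) (hφ (bas (DGHVIdx.I a)) (bas (DGHVIdx.I b)))
    rw [hII, show ⁅φ (bas (DGHVIdx.I a)), bas (DGHVIdx.I b)⁆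
        = -⁅bas (DGHVIdx.I b), φ (bas (DGHVIdx.I a))⁆ from (lie_skew _ _).symm] at h
    simp only [map_add, map_smul, map_neg, map_zero, smul_eq_mul, cII] at h
    simp only [hfD]
    linear_combination h
  have MLC0 : ∀ a : G, ⁅bas (DGHVIdx.L a), φ (bas DGHVIdx.CL)⁆ = 0 := by
    intro a
    have h := hφ (bas (DGHVIdx.L a)) (bas DGHVIdx.CL)
    rw [hCR, map_zero, hCR (φ (bas (DGHVIdx.L a))), zero_add] at h
    have h2 : (0 : Lg) = ((1:ℂ)/2) • ⁅bas (DGHVIdx.L a), φ (bas DGHVIdx.CL)⁆ := h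
    have := congrArg (fun z : Lg => (2 : ℂ) • z) h2
    simpa [smul_smul] using this.symm
  have MLC_L : ∀ a d : G, ((d : ℂ) - 2 * a) * gl (d - a) = 0 := by
    intro a d
    have h := congrArg (bas.coord (DGHVIdx.L d)) (MLC0 a)
    rw [cLL] at h
    simpa [hgl] using h
  have MLC_I : ∀ a d : G, ((d : ℂ) - a - lam * a) * gi (d - a) = 0 := by
    intro a d
    have h := congrArg (bas.coord (DGHVIdx.I d)) (MLC0 a)
    rw [cLI] at h
    simpa [hgi] using h
  -- eigen-equations from L₀
  have e2 : ∀ b d : G, (2 * (b : ℂ) - d) * fA b d = (2 * (b : ℂ) - d) * fA 0 (d - b) := by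
    intro b d
    have h := MLL_L 0 b d
    simp only [ZeroMemClass.coe_zero, zero_add, sub_zero, mul_zero,
      show ((0 : ℂ)) ^ 3 / 12 = (0 : ℂ) from by norm_num, ite_self, zero_mul, add_zero] at h
    linear_combination 2 * h
  have e2' : ∀ b d : G, (d : ℂ) ≠ 2 * b → fA b d = fA 0 (d - b) := by
    intro b d hne
    have hne2 : (2 * (b : ℂ) - d) ≠ 0 := fun hc => hne (by linear_combination -hc)
    exact mul_left_cancel₀ hne2 (e2 b d)
  have e3 : ∀ b d : G, (2 * (b : ℂ) - d) * fB b d = -((d : ℂ) - b - lam * b) * fB 0 (d - b) := by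
    intro b d
    have h := MLL_I 0 b d
    simp only [ZeroMemClass.coe_zero, zero_add, sub_zero, mul_zero,
      show ((0 : ℂ)) ^ 3 / 12 = (0 : ℂ) from by norm_num, ite_self, zero_mul, add_zero] at h
    linear_combination 2 * h
  have e5 : ∀ b d : G, (2 * (b : ℂ) - d) * fD b d = 0 := by
    intro b d
    have h := MLI_L 0 b d
    simp only [ZeroMemClass.coe_zero, zero_add, sub_zero, mul_zero, zero_mul, zero_sub] at h
    linear_combination 2 * h
  have e6 : ∀ b d : G, (2 * (b : ℂ) - d) * fE b d
      = ((b : ℂ) - lam * ((d : ℂ) - b)) * fA 0 (d - b) := by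
    intro b d
    have h := MLI_I 0 b d
    simp only [ZeroMemClass.coe_zero, zero_add, sub_zero, mul_zero, zero_mul, zero_sub] at h
    linear_combination 2 * h
  -- Step S1 : fA 0 t = 0 for t ≠ 0
  have halpha : ∀ t : G, t ≠ 0 → fA 0 t = 0 := by
    intro t ht
    have htC : (t : ℂ) ≠ 0 := cne t ht
    obtain ⟨a, ha⟩ := avoid [0, (t : ℂ), -(t : ℂ), -(t : ℂ) / 2, -2 * (t : ℂ)]
    have haC0 : (a : ℂ) ≠ 0 := ha 0 (by simp)
    have hat : (a : ℂ) ≠ (t : ℂ) := ha (t : ℂ) (by simp)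
    have hamt : (a : ℂ) ≠ -(t : ℂ) := ha (-(t : ℂ)) (by simp)
    have hamt2 : (a : ℂ) ≠ -(t : ℂ) / 2 := ha (-(t : ℂ) / 2) (by simp)
    have ham2t : (a : ℂ) ≠ -2 * (t : ℂ) := ha (-2 * (t : ℂ)) (by simp)
    -- first instance : a = 0, b = -t
    have h1 := MLL_C 0 (-t)
    rw [show (0 : G) + -t = -t from by abel, if_neg (neg_ne_zero.mpr ht), neg_neg,
      neg_zero] at h1
    push_cast at h1
    -- second instance : general a, b = -t - a
    have h2 := MLL_C a (-t - a)
    rw [show a + (-t - a) = -t from by abel, if_neg (neg_ne_zero.mpr ht),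
      show -(-t - a) = t + a from by abel] at h2
    have hA1 : fA a (t + a) = fA 0 t := by
      rw [e2' a (t + a) (by push_cast; intro hc; exact hat (by linear_combination -hc)),
        show t + a - a = t from by abel]
    have hA2 : fA (-t - a) (-a) = fA 0 t := by
      rw [e2' (-t - a) (-a) (by push_cast; intro hc; exact ham2t (by linear_combination hc)),
        show -a - (-t - a) = t from by abel]
    rw [hA1, hA2] at h2
    push_cast at h2
    have key : (a : ℂ) * t * ((t : ℂ) + a) * ((t : ℂ) + 2 * a) * fA 0 t = 0 := by
      linear_combination (24 * ((t : ℂ) + 2 * a)) * h1 - (24 * (t : ℂ)) * h2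
    have hne : (a : ℂ) * t * ((t : ℂ) + a) * ((t : ℂ) + 2 * a) ≠ 0 := by
      apply mul_ne_zero (mul_ne_zero (mul_ne_zero haC0 htC) _) _
      · intro hc; exact hamt (by linear_combination hc)
      · intro hc; exact hamt2 (by linear_combination hc / 2)
    exact (mul_eq_zero.mp key).resolve_left hne
  -- Step S2 : fA a (a+a) = 0 for a ≠ 0
  have hA2a : ∀ a : G, a ≠ 0 → fA a (a + a) = 0 := by
    intro a haz
    obtain ⟨b, hb⟩ := avoid [0, (a : ℂ), -(a : ℂ), 2 * (a : ℂ)]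
    have hb0 : (b : ℂ) ≠ 0 := hb 0 (by simp)
    have hba : (b : ℂ) ≠ (a : ℂ) := hb (a : ℂ) (by simp)
    have hbma : (b : ℂ) ≠ -(a : ℂ) := hb (-(a : ℂ)) (by simp)
    have hb2a : (b : ℂ) ≠ 2 * (a : ℂ) := hb (2 * (a : ℂ)) (by simp)
    have h := MLL_L a b (a + a + b)
    rw [if_neg (fun hh : a + b = 0 => hbma (by
        have := congrArg (fun z : G => (z : ℂ)) hh; push_cast at this
        linear_combination this))] at h
    have hX1 : fA (a + b) (a + a + b) = 0 := by
      rw [e2' (a + b) (a + a + b) (by push_cast; intro hc; exact hb0 (by linear_combination -hc)),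
        show a + a + b - (a + b) = a from by abel]
      exact halpha a haz
    have hX2 : fA b (a + a + b - a) = 0 := by
      rw [show a + a + b - a = a + b from by abel,
        e2' b (a + b) (by push_cast; intro hc; exact hba (by linear_combination -hc)),
        show a + b - b = a from by abel]
      exact halpha a haz
    rw [hX1, hX2, show a + a + b - b = a + a from by abel] at h
    push_cast at h
    have key : (2 * (a : ℂ) - b) * fA a (a + a) = 0 := by linear_combination 2 * h
    have hne : (2 * (a : ℂ) - b) ≠ 0 := fun hc => hb2a (by linear_combination -hc)
    exact (mul_eq_zero.mp key).resolve_left hne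
  -- full description of fA
  have hAfull : ∀ b d : G, fA b d = if b = d then fA 0 0 else 0 := by
    intro b d
    by_cases hbd : b = d
    · subst hbd
      rw [if_pos rfl]
      by_cases hb0 : b = 0
      · subst hb0; rfl
      · rw [e2' b b (fun hc => (cne b hb0) (by linear_combination -hc)), sub_self]
    · rw [if_neg hbd]
      by_cases hd2 : (d : ℂ) = 2 * (b : ℂ)
      · have hdg : d = b + b := cinj _ _ (by push_cast; linear_combination hd2)
        have hb0 : b ≠ 0 := fun hh => hbd (by rw [hh] at hdg ⊢; rw [hdg]; abel)
        rw [hdg]; exact hA2a b hb0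
      · rw [e2' b d hd2]
        exact halpha (d - b) (fun hh => hbd (cinj b d (by
          have := congrArg (fun z : G => (z : ℂ)) hh; push_cast at this
          linear_combination -this)))
  have hAκ : ∀ b : G, fA b b = fA 0 0 := fun b => by rw [hAfull, if_pos rfl]
  have hAne : ∀ b d : G, b ≠ d → fA b d = 0 := fun b d h => by rw [hAfull, if_neg h]
  -- Step S3 : fC s = 0 for s ≠ 0
  have hCne : ∀ s : G, s ≠ 0 → fC s = 0 := by
    intro s hs
    have h := MLL_C 0 s
    rw [show (0 : G) + s = s from by abel, if_neg (by simpa using hs), neg_zero] at h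
    rw [hAne 0 (-s) (fun hh => hs (by simpa using (congrArg (fun z : G => -z) hh).symm)),
      hAne s 0 hs] at h
    push_cast at h
    have key : (s : ℂ) * fC s = 0 := by linear_combination h
    exact (mul_eq_zero.mp key).resolve_left (cne s hs)
  -- Step S6 : coordinates of φ(C_L)
  have hgl0 : ∀ c : G, gl c = 0 := by
    intro c
    obtain ⟨a, ha⟩ := avoid [(c : ℂ)]
    have h := MLC_L a (c + a)
    rw [show c + a - a = c from by abel] at h
    have hne : ((c + a : G) : ℂ) - 2 * a ≠ 0 := by
      push_cast; intro hc; exact ha (c : ℂ) (by simp) (by linear_combination -hc)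
    exact (mul_eq_zero.mp h).resolve_left hne
  have hgi0 : ∀ c : G, gi c = 0 := by
    intro c
    obtain ⟨a, ha⟩ := avoid [(c : ℂ) / lam]
    have h := MLC_I a (c + a)
    rw [show c + a - a = c from by abel] at h
    have hne : ((c + a : G) : ℂ) - a - lam * a ≠ 0 := by
      push_cast; intro hc
      exact ha ((c : ℂ) / lam) (by simp) (by rw [eq_div_iff hlam0]; linear_combination -hc)
    exact (mul_eq_zero.mp h).resolve_left hne
  have k1 := MLL_C e (-e)
  rw [show e + -e = (0 : G) from by abel, if_pos rfl, neg_neg, hAκ e, hAκ (-e)] at k1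
  have k2 := MLL_C (e + e) (-(e + e))
  rw [show (e + e) + -(e + e) = (0 : G) from by abel, if_pos rfl, neg_neg,
    hAκ (e + e), hAκ (-(e + e))] at k2
  push_cast at k1 k2
  have hgcκ : gc = fA 0 0 := by
    have key : ((e : ℂ) ^ 3 / 2) * (gc - fA 0 0) = 0 := by
      linear_combination (-2 : ℂ) * k1 + k2
    have hne : (e : ℂ) ^ 3 / 2 ≠ 0 := div_ne_zero (pow_ne_zero 3 heC) two_ne_zero
    have := (mul_eq_zero.mp key).resolve_left hne
    linear_combination this
  have hC0 : fC 0 = 0 := by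
    rw [hgcκ] at k1
    have key : (-2 * (e : ℂ)) * fC 0 = 0 := by linear_combination k1
    have hne : (-2 * (e : ℂ)) ≠ 0 := mul_ne_zero (neg_ne_zero.mpr two_ne_zero) heC
    exact (mul_eq_zero.mp key).resolve_left hne
  have hCall : ∀ b : G, fC b = 0 := fun b => by
    by_cases hb : b = 0
    · rw [hb]; exact hC0
    · exact hCne b hb
  -- Step S4 : fB 0 t = 0
  have hBxx : ∀ x : G, x ≠ 0 → fB x x = lam * fB 0 0 := by
    intro x hx
    have h := e3 x x
    rw [show x - x = (0 : G) from sub_self x] at h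
    have h2 : (x : ℂ) * fB x x = (x : ℂ) * (lam * fB 0 0) := by linear_combination h
    exact mul_left_cancel₀ (cne x hx) h2
  have hbeta0 : fB 0 0 = 0 := by
    have h := MLL_I e (e + e) (e + e + e)
    have hcond : ¬(e + e + e = 0) := fun hh => heC (by
      have := congrArg (fun z : G => (z : ℂ)) hh; push_cast at this
      linear_combination this / 3)
    rw [show e + (e + e) = e + e + e from by abel, if_neg hcond,
      show e + e + e - (e + e) = e from by abel,
      show e + e + e - e = e + e from by abel] at h
    rw [hBxx e he,
      hBxx (e + e) (ne0 _ (by push_cast; intro hc; exact heC (by linear_combination hc / 2))),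
      hBxx (e + e + e) (ne0 _ (by push_cast; intro hc; exact heC (by linear_combination hc / 3)))] at h
    push_cast at h
    have key : (e : ℂ) * lam * (1 - lam) * fB 0 0 = 0 := by linear_combination 2 * h
    have hne : (e : ℂ) * lam * (1 - lam) ≠ 0 :=
      mul_ne_zero (mul_ne_zero heC hlam0) (fun hc => hlam1 (by linear_combination -hc))
    exact (mul_eq_zero.mp key).resolve_left hne
  have hbeta : ∀ t : G, fB 0 t = 0 := by
    intro t
    by_cases ht : t = 0
    · rw [ht]; exact hbeta0
    · have htC := cne t ht
      have hBa : fB (t + t) (t + t + t) = -(1 - 2 * lam) * fB 0 t := by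
        have h := e3 (t + t) (t + t + t)
        rw [show t + t + t - (t + t) = t from by abel] at h
        push_cast at h
        have h2 : (t : ℂ) * fB (t + t) (t + t + t)
            = (t : ℂ) * (-(1 - 2 * lam) * fB 0 t) := by linear_combination h
        exact mul_left_cancel₀ htC h2
      have hBb : fB (t + t + t) (t + t + t + t) = -((1 - 3 * lam) / 2) * fB 0 t := by
        have h := e3 (t + t + t) (t + t + t + t)
        rw [show t + t + t + t - (t + t + t) = t from by abel] at h
        push_cast at h
        have h2 : (2 * (t : ℂ)) * fB (t + t + t) (t + t + t + t)
            = (2 * (t : ℂ)) * (-((1 - 3 * lam) / 2) * fB 0 t) := by linear_combination h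
        exact mul_left_cancel₀ (mul_ne_zero two_ne_zero htC) h2
      have hBs : fB (t + t + t + t + t) (t + t + t + t + t + t)
          = -((1 - 5 * lam) / 4) * fB 0 t := by
        have h := e3 (t + t + t + t + t) (t + t + t + t + t + t)
        rw [show t + t + t + t + t + t - (t + t + t + t + t) = t from by abel] at h
        push_cast at h
        have h2 : (4 * (t : ℂ)) * fB (t + t + t + t + t) (t + t + t + t + t + t)
            = (4 * (t : ℂ)) * (-((1 - 5 * lam) / 4) * fB 0 t) := by linear_combination h
        exact mul_left_cancel₀ (mul_ne_zero (by norm_num : (4:ℂ) ≠ 0) htC) h2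
      have hBm : fB (-t) 0 = ((1 + lam) / 2) * fB 0 t := by
        have h := e3 (-t) 0
        rw [show (0 : G) - -t = t from by abel] at h
        push_cast at h
        have h2 : (-2 * (t : ℂ)) * fB (-t) 0
            = (-2 * (t : ℂ)) * (((1 + lam) / 2) * fB 0 t) := by linear_combination h
        exact mul_left_cancel₀ (mul_ne_zero (neg_ne_zero.mpr two_ne_zero) htC) h2
      have M := MLL_I (t + t) (t + t + t) (t + t + t + t + t + t)
      rw [show (t + t) + (t + t + t) = t + t + t + t + t from by abel,
        if_neg (fun hh : t + t + t + t + t = 0 => htC (by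
          have := congrArg (fun z : G => (z : ℂ)) hh; push_cast at this
          linear_combination this / 5)),
        show t + t + t + t + t + t - (t + t + t) = t + t + t from by abel,
        show t + t + t + t + t + t - (t + t) = t + t + t + t from by abel] at M
      rw [hBa, hBb, hBs] at M
      push_cast at M
      have key1 : (t : ℂ) * (6 * lam ^ 2 - 9 * lam + 3) * fB 0 t = 0 := by
        linear_combination (-4 : ℂ) * M
      have M2 := MLL_I (t + t + t) (-t) (t + t + t)
      rw [show (t + t + t) + -t = t + t from by abel,
        if_neg (fun hh : t + t = 0 => htC (by
          have := congrArg (fun z : G => (z : ℂ)) hh; push_cast at this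
          linear_combination this / 2)),
        show t + t + t - -t = t + t + t + t from by abel,
        show t + t + t - (t + t + t) = (0 : G) from by abel] at M2
      rw [hBa, hBb, hBm] at M2
      push_cast at M2
      have key2 : (t : ℂ) * (6 * lam ^ 2 - 18 * lam + 12) * fB 0 t = 0 := by
        linear_combination (4 : ℂ) * M2
      by_contra hb0
      have q1 : 6 * lam ^ 2 - 9 * lam + 3 = 0 := by
        rcases mul_eq_zero.mp key1 with h' | h'
        · rcases mul_eq_zero.mp h' with h'' | h''
          · exact absurd h'' htC
          · exact h''
        · exact absurd h' hb0
      have q2 : 6 * lam ^ 2 - 18 * lam + 12 = 0 := by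
        rcases mul_eq_zero.mp key2 with h' | h'
        · rcases mul_eq_zero.mp h' with h'' | h''
          · exact absurd h'' htC
          · exact h''
        · exact absurd h' hb0
      exact hlam1 (by linear_combination (q1 - q2) / 9)
  -- Step S5 : fB ≡ 0
  have hB0 : ∀ b d : G, fB b d = 0 := by
    intro b d
    by_cases hd2 : (d : ℂ) = 2 * b
    · have hdg : d = b + b := cinj _ _ (by push_cast; linear_combination hd2)
      rw [hdg]
      obtain ⟨c, hc⟩ := avoid [0, (b : ℂ), -(b : ℂ), 2 * (b : ℂ) / lam]
      have hc0 : (c : ℂ) ≠ 0 := hc 0 (by simp)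
      have hX1 : fB (b + c) (b + b + c) = 0 := by
        have h := e3 (b + c) (b + b + c)
        rw [show b + b + c - (b + c) = b from by abel, hbeta b] at h
        have key : (2 * ((b + c : G) : ℂ) - ((b + b + c : G) : ℂ)) * fB (b + c) (b + b + c)
            = 0 := by linear_combination h
        have hne : (2 * ((b + c : G) : ℂ) - ((b + b + c : G) : ℂ)) ≠ 0 := by
          push_cast; intro hcc; exact hc0 (by linear_combination hcc)
        exact (mul_eq_zero.mp key).resolve_left hne
      have hX2 : fB c (b + c) = 0 := by
        have h := e3 c (b + c)
        rw [show b + c - c = b from by abel, hbeta b] at h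
        have key : (2 * ((c : G) : ℂ) - ((b + c : G) : ℂ)) * fB c (b + c) = 0 := by
          linear_combination h
        have hne : (2 * ((c : G) : ℂ) - ((b + c : G) : ℂ)) ≠ 0 := by
          push_cast; intro hcc; exact (hc (b : ℂ) (by simp)) (by linear_combination hcc)
        exact (mul_eq_zero.mp key).resolve_left hne
      have M := MLL_I b c (b + b + c)
      rw [show b + c = b + c from rfl,
        if_neg (fun hh : b + c = 0 => (hc (-(b : ℂ)) (by simp)) (by
          have := congrArg (fun z : G => (z : ℂ)) hh; push_cast at this
          linear_combination this)),
        show b + b + c - c = b + b from by abel,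
        show b + b + c - b = b + c from by abel] at M
      rw [hX1, hX2] at M
      push_cast at M
      have key : (2 * (b : ℂ) - lam * c) * fB b (b + b) = 0 := by linear_combination 2 * M
      have hne : (2 * (b : ℂ) - lam * c) ≠ 0 := by
        intro hcc
        exact (hc (2 * (b : ℂ) / lam) (by simp)) (by
          rw [eq_div_iff hlam0]; linear_combination -hcc)
      exact (mul_eq_zero.mp key).resolve_left hne
    · have h := e3 b d
      rw [hbeta (d - b)] at h
      have key : (2 * (b : ℂ) - d) * fB b d = 0 := by linear_combination h
      have hne : (2 * (b : ℂ) - d) ≠ 0 := fun hc' => hd2 (by linear_combination -hc')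
      exact (mul_eq_zero.mp key).resolve_left hne
  -- Step S7 : fD ≡ 0
  have hD0 : ∀ b d : G, fD b d = 0 := by
    intro b d
    by_cases hd2 : (d : ℂ) = 2 * b
    · have hdg : d = b + b := cinj _ _ (by push_cast; linear_combination hd2)
      rw [hdg]
      obtain ⟨c, hc⟩ := avoid [(b : ℂ), 2 * lam * (b : ℂ)]
      have M := MII_I b c (c + b + b)
      rw [show c + b + b - c = b + b from by abel,
        show c + b + b - b = c + b from by abel] at M
      have hX : fD c (c + b) = 0 := by
        have h := e5 c (c + b)
        have hne : (2 * ((c : G) : ℂ) - ((c + b : G) : ℂ)) ≠ 0 := by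
          push_cast; intro hcc; exact (hc (b : ℂ) (by simp)) (by linear_combination hcc)
        exact (mul_eq_zero.mp h).resolve_left hne
      rw [hX] at M
      push_cast at M
      have key : ((c : ℂ) - 2 * lam * b) * fD b (b + b) = 0 := by linear_combination -2 * M
      have hne : ((c : ℂ) - 2 * lam * b) ≠ 0 := by
        intro hcc; exact (hc (2 * lam * (b : ℂ)) (by simp)) (by linear_combination hcc)
      exact (mul_eq_zero.mp key).resolve_left hne
    · have h := e5 b d
      have hne : (2 * (b : ℂ) - d) ≠ 0 := fun hc' => hd2 (by linear_combination -hc')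
      exact (mul_eq_zero.mp h).resolve_left hne
  -- Step S8 : fE is diagonal
  have hEdiag : ∀ b : G, b ≠ 0 → fE b b = fA 0 0 := by
    intro b hb
    have h := e6 b b
    rw [show b - b = (0 : G) from sub_self b] at h
    have h2 : (b : ℂ) * fE b b = (b : ℂ) * fA 0 0 := by push_cast at h; linear_combination h
    exact mul_left_cancel₀ (cne b hb) h2
  have hE00 : fE 0 0 = fA 0 0 := by
    have M := MLI_I e 0 e
    rw [add_zero, sub_zero, show e - e = (0 : G) from sub_self e, hAκ e, hEdiag e he] at M
    push_cast at M
    have key : lam * (e : ℂ) * (fE 0 0 - fA 0 0) = 0 := by linear_combination 2 * M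
    have hne : lam * (e : ℂ) ≠ 0 := mul_ne_zero hlam0 heC
    have := (mul_eq_zero.mp key).resolve_left hne
    linear_combination this
  have hEoff : ∀ b d : G, b ≠ d → fE b d = 0 := by
    intro b d hbd
    by_cases hd2 : (d : ℂ) = 2 * b
    · have hdg : d = b + b := cinj _ _ (by push_cast; linear_combination hd2)
      have hb0 : b ≠ 0 := fun hh => hbd (by rw [hh] at hdg ⊢; rw [hdg]; abel)
      rw [hdg]
      obtain ⟨a, ha⟩ := avoid [0, (b : ℂ) / lam, 2 * (b : ℂ) / lam]
      have ha0 : (a : ℂ) ≠ 0 := ha 0 (by simp)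
      have M := MLI_I a b (a + b + b)
      rw [show a + b + b - b = a + b from by abel,
        show a + b + b - a = b + b from by abel] at M
      have hx1 : fE (a + b) (a + b + b) = 0 := by
        have h := e6 (a + b) (a + b + b)
        rw [show a + b + b - (a + b) = b from by abel, halpha b hb0, mul_zero] at h
        have hne : (2 * ((a + b : G) : ℂ) - ((a + b + b : G) : ℂ)) ≠ 0 := by
          push_cast; intro hcc; exact ha0 (by linear_combination hcc)
        exact (mul_eq_zero.mp h).resolve_left hne
      have hx2 : fA a (a + b) = 0 := hAne a (a + b) (fun hh => hb0 (cinj b 0 (by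
        have := congrArg (fun z : G => (z : ℂ)) hh; push_cast at this ⊢
        linear_combination -this)))
      rw [hx1, hx2] at M
      push_cast at M
      have key : (2 * (b : ℂ) - lam * a) * fE b (b + b) = 0 := by linear_combination -2 * M
      have hne : (2 * (b : ℂ) - lam * a) ≠ 0 := by
        intro hcc
        exact (ha (2 * (b : ℂ) / lam) (by simp)) (by
          rw [eq_div_iff hlam0]; linear_combination -hcc)
      exact (mul_eq_zero.mp key).resolve_left hne
    · have h := e6 b d
      rw [halpha (d - b) (fun hh => hbd (cinj b d (by
        have := congrArg (fun z : G => (z : ℂ)) hh; push_cast at this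
        linear_combination -this))), mul_zero] at h
      have hne : (2 * (b : ℂ) - d) ≠ 0 := fun hc' => hd2 (by linear_combination -hc')
      exact (mul_eq_zero.mp h).resolve_left hne
  have hEfull : ∀ b d : G, fE b d = if b = d then fA 0 0 else 0 := by
    intro b d
    by_cases hbd : b = d
    · subst hbd
      rw [if_pos rfl]
      by_cases hb0 : b = 0
      · rw [hb0]; exact hE00
      · exact hEdiag b hb0
    · rw [if_neg hbd]; exact hEoff b d hbd
  -- Step S9 : fF ≡ 0
  have hF0 : ∀ s : G, fF s = 0 := by
    intro s
    have h1lam : (1 : ℂ) + lam ≠ 0 := fun hc => hlamm1 (by linear_combination hc)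
    obtain ⟨a, ha⟩ := avoid [(s : ℂ) / (1 + lam)]
    have M := MLI_C a (s - a)
    rw [show a + (s - a) = s from by abel, hD0 (s - a) (-a)] at M
    push_cast at M
    have key : ((s : ℂ) - a - lam * a) * fF s = 0 := by linear_combination M
    have hne : ((s : ℂ) - a - lam * a) ≠ 0 := by
      intro hc
      exact (ha ((s : ℂ) / (1 + lam)) (by simp)) (by
        rw [eq_div_iff h1lam]; linear_combination -hc)
    exact (mul_eq_zero.mp key).resolve_left hne
  -- assembly
  refine ⟨fA 0 0, ?_⟩
  have final : ∀ i j : DGHVIdx G, bas.coord j (φ (bas i)) = fA 0 0 * bas.coord j (bas i) := by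
    intro i j
    simp only [hfA]
    cases i with
    | L b =>
      cases j with
      | L d =>
        have h := hAfull b d
        simp only [hfA] at h
        rw [h]
        by_cases hbd : b = d <;>
          simp [Module.Basis.coord_apply, Module.Basis.repr_self, Finsupp.single_apply, hbd]
      | I d =>
        have h := hB0 b d
        simp only [hfB] at h
        rw [h]
        simp [Module.Basis.coord_apply, Module.Basis.repr_self, Finsupp.single_apply]
      | CL =>
        have h := hCall b
        simp only [hfC] at h
        rw [h]
        simp [Module.Basis.coord_apply, Module.Basis.repr_self, Finsupp.single_apply]
    | I b =>
      cases j with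
      | L d =>
        have h := hD0 b d
        simp only [hfD] at h
        rw [h]
        simp [Module.Basis.coord_apply, Module.Basis.repr_self, Finsupp.single_apply]
      | I d =>
        have h := hEfull b d
        simp only [hfE, hfA] at h
        rw [h]
        by_cases hbd : b = d <;>
          simp [Module.Basis.coord_apply, Module.Basis.repr_self, Finsupp.single_apply, hbd]
      | CL =>
        have h := hF0 b
        simp only [hfF] at h
        rw [h]
        simp [Module.Basis.coord_apply, Module.Basis.repr_self, Finsupp.single_apply]
    | CL =>
      cases j with
      | L d =>
        have h := hgl0 d
        simp only [hgl] at h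
        rw [h]
        simp [Module.Basis.coord_apply, Module.Basis.repr_self, Finsupp.single_apply]
      | I d =>
        have h := hgi0 d
        simp only [hgi] at h
        rw [h]
        simp [Module.Basis.coord_apply, Module.Basis.repr_self, Finsupp.single_apply]
      | CL =>
        have h := hgcκ
        simp only [hgc, hfA] at h
        rw [h]
        simp [Module.Basis.coord_apply, Module.Basis.repr_self, Finsupp.single_apply]
  apply bas.ext
  intro i
  have hrepr : bas.repr (φ (bas i)) = bas.repr ((fA 0 0) • bas i) := by
    ext j
    rw [map_smul]
    have h := final i j
    simp only [Module.Basis.coord_apply] at h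
    rw [h]
    simp [Finsupp.smul_apply, smul_eq_mul, Module.Basis.repr_self, Finsupp.single_apply,
      mul_ite, mul_one, mul_zero]
  have h2 := bas.repr.injective hrepr
  simpa using h2
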